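/- Let X be a t×d real matrix and M a full-rank d×d real matrix with t ≥ d, and let ε ∈ (0,1). If ‖(XM)ᵀ(XM) − I_d‖ ≤ max(ε, ε²), then (1 − ε)/s₁(M) ≤ s_d(X) and s₁(X) ≤ (1 + ε)/s_d(M), where s₁ ≥ ⋯ ≥ s_d denote singular values in non-increasing order. -/

import Mathlib

open Matrix

/-- Operator norm (induced by Euclidean norms), which equals the largest singular value. -/
noncomputable def sMax {m n : Type*} [Fintype m] [Fintype n] [DecidableEq n]
    (A : Matrix m n ℝ) : ℝ :=
  ‖LinearMap.toContinuousLinearMap (Matrix.toEuclideanLin A)‖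

/-- The smallest singular value of a tall matrix: the infimum of `‖A u‖` over unit vectors. -/
noncomputable def sMin {m n : Type*} [Fintype m] [Fintype n] [DecidableEq n]
    (A : Matrix m n ℝ) : ℝ :=
  sInf {r : ℝ | ∃ u : EuclideanSpace ℝ n, ‖u‖ = 1 ∧ r = ‖Matrix.toEuclideanLin A u‖}

set_option linter.unusedSectionVars false
section Aux

variable {l m n : Type*} [Fintype l] [Fintype m] [Fintype n] [DecidableEq m] [DecidableEq n]

lemma toEuclideanLin_mul_apply (A : Matrix l m ℝ) (B : Matrix m n ℝ) (v : EuclideanSpace ℝ n) :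
    Matrix.toEuclideanLin (A * B) v = Matrix.toEuclideanLin A (Matrix.toEuclideanLin B v) := by
  simp [toEuclideanLin_apply, mulVec_mulVec]

lemma toEuclideanLin_one_apply (v : EuclideanSpace ℝ n) :
    Matrix.toEuclideanLin (1 : Matrix n n ℝ) v = v := by
  simp [toEuclideanLin_apply]

lemma sMax_nonneg (A : Matrix m n ℝ) : 0 ≤ sMax A := norm_nonneg _

lemma norm_le_sMax (A : Matrix m n ℝ) (v : EuclideanSpace ℝ n) :
    ‖Matrix.toEuclideanLin A v‖ ≤ sMax A * ‖v‖ := by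
  have := (LinearMap.toContinuousLinearMap (Matrix.toEuclideanLin A)).le_opNorm v
  simpa [sMax] using this

lemma sMax_le (A : Matrix m n ℝ) (c : ℝ) (hc : 0 ≤ c)
    (h : ∀ v : EuclideanSpace ℝ n, ‖Matrix.toEuclideanLin A v‖ ≤ c * ‖v‖) : sMax A ≤ c := by
  apply ContinuousLinearMap.opNorm_le_bound _ hc
  intro v; simpa using h v

lemma sMin_nonneg (A : Matrix m n ℝ) : 0 ≤ sMin A :=
  Real.sInf_nonneg (by rintro r ⟨u, hu, rfl⟩; exact norm_nonneg _)

lemma sMin_le (A : Matrix m n ℝ) (u : EuclideanSpace ℝ n) (hu : ‖u‖ = 1) :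
    sMin A ≤ ‖Matrix.toEuclideanLin A u‖ :=
  csInf_le ⟨0, by rintro r ⟨u, hu, rfl⟩; exact norm_nonneg _⟩ ⟨u, hu, rfl⟩

lemma le_sMin [Nonempty n] (A : Matrix m n ℝ) (c : ℝ)
    (h : ∀ u : EuclideanSpace ℝ n, ‖u‖ = 1 → c ≤ ‖Matrix.toEuclideanLin A u‖) :
    c ≤ sMin A := by
  apply le_csInf
  · refine ⟨_, ⟨(EuclideanSpace.single (Classical.arbitrary n) (1:ℝ)), by simp, rfl⟩⟩
  · rintro r ⟨u, hu, rfl⟩; exact h u hu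

lemma sMin_mul_norm_le (A : Matrix m n ℝ) (v : EuclideanSpace ℝ n) :
    sMin A * ‖v‖ ≤ ‖Matrix.toEuclideanLin A v‖ := by
  rcases eq_or_ne v 0 with rfl | hv
  · simp
  · have hnv : (0:ℝ) < ‖v‖ := norm_pos_iff.mpr hv
    have h1 : ‖(‖v‖⁻¹ • v : EuclideanSpace ℝ n)‖ = 1 := by
      rw [norm_smul]; simp [abs_of_pos (inv_pos.mpr hnv), inv_mul_cancel₀ hnv.ne']
    have := sMin_le A _ h1
    rw [_root_.map_smul, norm_smul, Real.norm_eq_abs, abs_of_pos (inv_pos.mpr hnv)] at this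
    have h2 := mul_le_mul_of_nonneg_right this hnv.le
    calc sMin A * ‖v‖ ≤ ‖v‖⁻¹ * ‖Matrix.toEuclideanLin A v‖ * ‖v‖ := h2
      _ = ‖Matrix.toEuclideanLin A v‖ := by field_simp

lemma norm_le_of_unit_bound (A : Matrix m n ℝ) (c : ℝ) (hc : 0 ≤ c)
    (h : ∀ u : EuclideanSpace ℝ n, ‖u‖ = 1 → ‖Matrix.toEuclideanLin A u‖ ≤ c)
    (v : EuclideanSpace ℝ n) : ‖Matrix.toEuclideanLin A v‖ ≤ c * ‖v‖ := by
  rcases eq_or_ne v 0 with rfl | hv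
  · simp
  · have hnv : (0:ℝ) < ‖v‖ := norm_pos_iff.mpr hv
    have h1 : ‖(‖v‖⁻¹ • v : EuclideanSpace ℝ n)‖ = 1 := by
      rw [norm_smul]; simp [abs_of_pos (inv_pos.mpr hnv), inv_mul_cancel₀ hnv.ne']
    have := h _ h1
    rw [_root_.map_smul, norm_smul, Real.norm_eq_abs, abs_of_pos (inv_pos.mpr hnv)] at this
    have h2 := mul_le_mul_of_nonneg_right this hnv.le
    calc ‖Matrix.toEuclideanLin A v‖ = ‖v‖⁻¹ * ‖Matrix.toEuclideanLin A v‖ * ‖v‖ := by field_simp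
      _ ≤ c * ‖v‖ := h2

end Aux

theorem stmt_2 {t d : ℕ} (htd : d ≤ t)
    (X : Matrix (Fin t) (Fin d) ℝ) (M : Matrix (Fin d) (Fin d) ℝ)
    (hM : IsUnit M.det) (ε : ℝ) (hε0 : 0 < ε) (hε1 : ε < 1)
    (h : sMax ((X * M)ᵀ * (X * M) - 1) ≤ max ε (ε ^ 2)) :
    (1 - ε) / sMax M ≤ sMin X ∧ sMax X ≤ (1 + ε) / sMin M := by
  rcases Nat.eq_zero_or_pos d with hd | hd
  · subst hd
    haveI : Subsingleton (EuclideanSpace ℝ (Fin 0)) :=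
      ⟨fun a b => PiLp.ext fun i => Fin.elim0 i⟩
    have hMX : sMax M = 0 := by
      have := sMax_le M 0 le_rfl (fun v => by
        rw [Subsingleton.elim v 0]; simp)
      linarith [sMax_nonneg M]
    have hXX : sMax X = 0 := by
      have := sMax_le X 0 le_rfl (fun v => by
        rw [Subsingleton.elim v 0]; simp)
      linarith [sMax_nonneg X]
    constructor
    · rw [hMX]; simpa using sMin_nonneg X
    · rw [hXX]; exact div_nonneg (by linarith) (sMin_nonneg M)
  · haveI : Nonempty (Fin d) := ⟨⟨0, hd⟩⟩
    set A := X * M with hA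
    -- the hypothesis gives sMax (Aᵀ A - 1) ≤ ε
    have hmax : max ε (ε ^ 2) = ε := by
      rw [max_eq_left]; nlinarith
    rw [hmax] at h
    -- key quadratic bound for unit vectors
    have key : ∀ u : EuclideanSpace ℝ (Fin d), ‖u‖ = 1 →
        |‖Matrix.toEuclideanLin A u‖ ^ 2 - 1| ≤ ε := by
      intro u hu
      have hT : Aᵀ = Aᴴ := (conjTranspose_eq_transpose_of_trivial A).symm
      have e1 : Matrix.toEuclideanLin (Aᵀ * A - 1) u
          = Matrix.toEuclideanLin Aᴴ (Matrix.toEuclideanLin A u) - u := by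
        rw [map_sub, LinearMap.sub_apply, toEuclideanLin_one_apply, hT,
          toEuclideanLin_mul_apply]
      have e2 : inner ℝ (Matrix.toEuclideanLin (Aᵀ * A - 1) u) u
          = ‖Matrix.toEuclideanLin A u‖ ^ 2 - (1:ℝ) := by
        rw [e1, inner_sub_left, Matrix.toEuclideanLin_conjTranspose_eq_adjoint,
          LinearMap.adjoint_inner_left, real_inner_self_eq_norm_sq,
          real_inner_self_eq_norm_sq, hu]
        ring
      rw [← e2]
      calc |inner ℝ (Matrix.toEuclideanLin (Aᵀ * A - 1) u) u|
          ≤ ‖Matrix.toEuclideanLin (Aᵀ * A - 1) u‖ * ‖u‖ := abs_real_inner_le_norm _ _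
        _ ≤ sMax (Aᵀ * A - 1) * ‖u‖ * ‖u‖ :=
            mul_le_mul_of_nonneg_right (norm_le_sMax _ _) (norm_nonneg _)
        _ ≤ ε := by rw [hu]; simpa using h
    -- unit-vector norm bounds for A
    have hAlow : ∀ u : EuclideanSpace ℝ (Fin d), ‖u‖ = 1 →
        1 - ε ≤ ‖Matrix.toEuclideanLin A u‖ := by
      intro u hu
      have := abs_le.mp (key u hu)
      nlinarith [norm_nonneg (Matrix.toEuclideanLin A u)]
    have hAup : ∀ u : EuclideanSpace ℝ (Fin d), ‖u‖ = 1 →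
        ‖Matrix.toEuclideanLin A u‖ ≤ 1 + ε := by
      intro u hu
      have := abs_le.mp (key u hu)
      nlinarith [norm_nonneg (Matrix.toEuclideanLin A u)]
    have hsMinA : 1 - ε ≤ sMin A := le_sMin A _ hAlow
    have hsMaxA : sMax A ≤ 1 + ε :=
      sMax_le A _ (by linarith) (norm_le_of_unit_bound A _ (by linarith) hAup)
    -- inverse of M
    have hMM : M⁻¹ * M = 1 := nonsing_inv_mul M hM
    have hMM' : M * M⁻¹ = 1 := mul_nonsing_inv M hM
    -- sMax M > 0 and sMin M > 0
    have hcomp : ∀ v : EuclideanSpace ℝ (Fin d),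
        Matrix.toEuclideanLin M (Matrix.toEuclideanLin M⁻¹ v) = v := by
      intro v; rw [← toEuclideanLin_mul_apply, hMM', toEuclideanLin_one_apply]
    have hcomp' : ∀ v : EuclideanSpace ℝ (Fin d),
        Matrix.toEuclideanLin M⁻¹ (Matrix.toEuclideanLin M v) = v := by
      intro v; rw [← toEuclideanLin_mul_apply, hMM, toEuclideanLin_one_apply]
    -- first inequality
    have hfirst : (1 - ε) / sMax M ≤ sMin X := by
      apply le_sMin
      intro u hu
      set v := Matrix.toEuclideanLin M⁻¹ u with hv
      have hXu : Matrix.toEuclideanLin X u = Matrix.toEuclideanLin A v := by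
        rw [hA, toEuclideanLin_mul_apply, hv, hcomp u]
      have h1 : 1 ≤ sMax M * ‖v‖ := by
        have := norm_le_sMax M v
        rw [hcomp u, hu] at this
        exact this
      have hMpos : 0 < sMax M := by
        by_contra hle
        push_neg at hle
        nlinarith [norm_nonneg v]
      have h2 : (1 - ε) * ‖v‖ ≤ ‖Matrix.toEuclideanLin A v‖ := by
        calc (1 - ε) * ‖v‖ ≤ sMin A * ‖v‖ :=
              mul_le_mul_of_nonneg_right hsMinA (norm_nonneg v)
          _ ≤ _ := sMin_mul_norm_le A v
      rw [hXu, div_le_iff₀ hMpos]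
      nlinarith [norm_nonneg (Matrix.toEuclideanLin A v)]
    -- sMin M > 0
    have hsMinMpos : 0 < sMin M := by
      have hMinv : 0 < sMax M⁻¹ := by
        obtain ⟨u, hu⟩ : ∃ u : EuclideanSpace ℝ (Fin d), ‖u‖ = 1 :=
          ⟨EuclideanSpace.single (Classical.arbitrary (Fin d)) 1, by simp⟩
        have h1 : 1 ≤ sMax M⁻¹ * ‖Matrix.toEuclideanLin M u‖ := by
          have := norm_le_sMax M⁻¹ (Matrix.toEuclideanLin M u)
          rw [hcomp' u, hu] at this
          exact this
        by_contra hle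
        push_neg at hle
        nlinarith [norm_nonneg (Matrix.toEuclideanLin M u)]
      have : (sMax M⁻¹)⁻¹ ≤ sMin M := by
        apply le_sMin
        intro u hu
        have h1 : 1 ≤ sMax M⁻¹ * ‖Matrix.toEuclideanLin M u‖ := by
          have := norm_le_sMax M⁻¹ (Matrix.toEuclideanLin M u)
          rw [hcomp' u, hu] at this
          exact this
        rw [inv_le_iff_one_le_mul₀ hMinv]
        linarith
      exact lt_of_lt_of_le (inv_pos.mpr hMinv) this
    -- second inequality
    have hsecond : sMax X ≤ (1 + ε) / sMin M := by
      apply sMax_le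
      · exact div_nonneg (by linarith) hsMinMpos.le
      intro v
      set w := Matrix.toEuclideanLin M⁻¹ v with hw
      have hXv : Matrix.toEuclideanLin X v = Matrix.toEuclideanLin A w := by
        rw [hA, toEuclideanLin_mul_apply, hw, hcomp v]
      have h1 : sMin M * ‖w‖ ≤ ‖v‖ := by
        have := sMin_mul_norm_le M w
        rw [hcomp v] at this
        exact this
      have h2 : ‖Matrix.toEuclideanLin A w‖ ≤ (1 + ε) * ‖w‖ := by
        calc ‖Matrix.toEuclideanLin A w‖ ≤ sMax A * ‖w‖ := norm_le_sMax A w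
          _ ≤ (1 + ε) * ‖w‖ := mul_le_mul_of_nonneg_right hsMaxA (norm_nonneg w)
      have h3 : ‖w‖ ≤ ‖v‖ / sMin M := by
        rw [le_div_iff₀ hsMinMpos]
        linarith [h1]
      calc ‖Matrix.toEuclideanLin X v‖ = ‖Matrix.toEuclideanLin A w‖ := by rw [hXv]
        _ ≤ (1 + ε) * ‖w‖ := h2
        _ ≤ (1 + ε) * (‖v‖ / sMin M) := by
            exact mul_le_mul_of_nonneg_left h3 (by linarith)
        _ = (1 + ε) / sMin M * ‖v‖ := by ring
    exact ⟨hfirst, hsecond⟩
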